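/- For any hypothesis class H with Littlestone dimension L(H) = 1, there is a deterministic apple tasting learner making at most 1 + 2√T mistakes on any realizable stream of length T. -/

import Mathlib

/-- `ALShatter H w d` : the hypothesis class `H` shatters some Apple Littlestone tree of
width `w` and depth `d`. Width `0` means the path has already ended (took the maximal
number of right/1 edges), in which case shattering only requires a consistent hypothesis. -/
def ALShatter {X : Type*} : Set (X → Bool) → ℕ → ℕ → Prop
  | H, _, 0 => H.Nonempty
  | H, 0, _ + 1 => H.Nonempty
  | H, w + 1, d + 1 =>
      ∃ x : X, ALShatter {h | h ∈ H ∧ h x = false} (w + 1) d ∧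
               ALShatter {h | h ∈ H ∧ h x = true} w d

/-- The Apple Littlestone dimension of `H` at width `w`. -/
noncomputable def ALdim {X : Type*} (H : Set (X → Bool)) (w : ℕ) : ℕ∞ :=
  sSup {d : ℕ∞ | ∃ n : ℕ, ALShatter H w n ∧ d = (n : ℕ∞)}

/-- `LShatter H d` : `H` shatters some Littlestone tree of depth `d`. -/
def LShatter {X : Type*} : Set (X → Bool) → ℕ → Prop
  | H, 0 => H.Nonempty
  | H, d + 1 =>
      ∃ x : X, LShatter {h | h ∈ H ∧ h x = false} d ∧
               LShatter {h | h ∈ H ∧ h x = true} d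

/-- The Littlestone dimension of `H`. -/
noncomputable def Ldim {X : Type*} (H : Set (X → Bool)) : ℕ∞ :=
  sSup {d : ℕ∞ | ∃ n : ℕ, LShatter H n ∧ d = (n : ℕ∞)}

/-- The Effective width of `H`: the least width `w ≥ 1` at which the
Apple Littlestone dimension is finite. -/
noncomputable def EffW {X : Type*} (H : Set (X → Bool)) : ℕ∞ :=
  sInf {w : ℕ∞ | ∃ n : ℕ, 1 ≤ n ∧ ALdim H n ≠ ⊤ ∧ w = (n : ℕ∞)}

/-- The apple-tasting history produced by running the deterministic apple-tasting
learner B on stream x with true labels y: the label is recorded only on rounds where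
B predicts 1. -/
def atRun {X : Type*} (B : List (X × Option Bool) → X → Bool) (x : ℕ → X)
    (y : ℕ → Bool) : ℕ → List (X × Option Bool)
  | 0 => []
  | t + 1 =>
      let hist := atRun B x y t
      hist ++ [(x t, if B hist (x t) then some (y t) else none)]



namespace ATaux

variable {X : Type*}

/-- All elements of `S` are equal (as functions). -/
def Sub (S : Set (X → Bool)) : Prop := ∀ g₁ ∈ S, ∀ g₂ ∈ S, g₁ = g₂

def VSet (H : Set (X → Bool)) (hist : List (X × Option Bool)) : Set (X → Bool) :=
  {h | h ∈ H ∧ ∀ p ∈ hist, ∀ b, p.2 = some b → h p.1 = b}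

def cnt (hist : List (X × Option Bool)) (h : X → Bool) : ℕ :=
  hist.countP (fun p => p.2.isNone && h p.1)

open Classical in
noncomputable def Learner (H : Set (X → Bool)) (n : ℕ)
    (hist : List (X × Option Bool)) (x : X) : Bool :=
  let V := VSet H hist
  if (∃ h ∈ V, h x = false) ∧ (∃ h ∈ V, h x = true) then
    (if Sub {g | g ∈ V ∧ g x = false} ∨ ∃ h ∈ V, h x = true ∧ n ≤ cnt hist h
     then true else false)
  else (if ∃ h ∈ V, h x = true then true else false)

lemma mem_VSet_append {H : Set (X → Bool)} {l : List (X × Option Bool)} {a : X}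
    {o : Option Bool} {g : X → Bool} :
    g ∈ VSet H (l ++ [(a, o)]) ↔ g ∈ VSet H l ∧ ∀ b, o = some b → g a = b := by
  simp only [VSet, Set.mem_setOf_eq, List.forall_mem_append, List.mem_singleton,
    forall_eq]
  tauto

lemma cnt_append {l : List (X × Option Bool)} {a : X} {o : Option Bool}
    {g : X → Bool} :
    cnt (l ++ [(a, o)]) g = cnt l g + (if o = none ∧ g a = true then 1 else 0) := by
  simp only [cnt, List.countP_append, List.countP_cons, List.countP_nil]
  cases o <;> cases hga : g a <;> simp [hga]

end ATaux


namespace ATaux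

variable {X : Type*} (H : Set (X → Bool)) (n : ℕ) (hstar : X → Bool) (x : ℕ → X)

noncomputable def hR : ℕ → List (X × Option Bool) :=
  atRun (Learner H n) x (fun s => hstar (x s))

noncomputable def pR (t : ℕ) : Bool := Learner H n (hR H n hstar x t) (x t)

noncomputable def vR (t : ℕ) : Set (X → Bool) := VSet H (hR H n hstar x t)

variable {H n hstar x}

lemma hR_succ (t : ℕ) :
    hR H n hstar x (t + 1) = hR H n hstar x t ++
      [(x t, if pR H n hstar x t then some (hstar (x t)) else none)] := rfl

lemma mem_vR_succ {g : X → Bool} {t : ℕ} :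
    g ∈ vR H n hstar x (t + 1) ↔ g ∈ vR H n hstar x t ∧
      (pR H n hstar x t = true → g (x t) = hstar (x t)) := by
  rw [vR, hR_succ, mem_VSet_append]
  cases hp : pR H n hstar x t <;> simp [vR, hp]

lemma vR_succ_false {t : ℕ} (hp : pR H n hstar x t = false) :
    vR H n hstar x (t + 1) = vR H n hstar x t := by
  ext g; rw [mem_vR_succ]; simp [hp]

lemma vR_antitone {s t : ℕ} (hst : s ≤ t) :
    vR H n hstar x t ⊆ vR H n hstar x s := by
  induction t with
  | zero => simp_all
  | succ t ih =>
      rcases Nat.lt_or_ge s (t+1) with h | h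
      · intro g hg
        rw [mem_vR_succ] at hg
        exact ih (Nat.lt_succ_iff.mp h) hg.1
      · have : s = t + 1 := le_antisymm hst h
        subst this; exact fun g hg => hg

lemma hstar_mem (hH : hstar ∈ H) (t : ℕ) : hstar ∈ vR H n hstar x t := by
  induction t with
  | zero => exact ⟨hH, by simp [hR, atRun]⟩
  | succ t ih => exact mem_vR_succ.mpr ⟨ih, fun _ => rfl⟩

lemma cnt_succ (g : X → Bool) (t : ℕ) :
    cnt (hR H n hstar x (t + 1)) g = cnt (hR H n hstar x t) g +
      (if pR H n hstar x t = false ∧ g (x t) = true then 1 else 0) := by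
  rw [hR_succ, cnt_append]
  cases hp : pR H n hstar x t <;> simp [hp]

lemma cnt_mono (g : X → Bool) {s t : ℕ} (hst : s ≤ t) :
    cnt (hR H n hstar x s) g ≤ cnt (hR H n hstar x t) g := by
  induction t with
  | zero => simp_all
  | succ t ih =>
      rcases Nat.lt_or_ge s (t+1) with h | h
      · calc cnt (hR H n hstar x s) g ≤ cnt (hR H n hstar x t) g :=
              ih (Nat.lt_succ_iff.mp h)
          _ ≤ _ := by rw [cnt_succ]; omega
      · have : s = t + 1 := le_antisymm hst h
        subst this; rfl

lemma cnt_eq_card (g : X → Bool) (t : ℕ) :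
    cnt (hR H n hstar x t) g =
      ((Finset.range t).filter
        (fun s => pR H n hstar x s = false ∧ g (x s) = true)).card := by
  classical
  induction t with
  | zero => simp [hR, atRun, cnt]
  | succ t ih =>
      rw [cnt_succ, ih, Finset.range_add_one, Finset.filter_insert]
      split <;> simp_all [Finset.card_insert_of_notMem]

end ATaux

namespace ATaux

variable {X : Type*}

lemma LShatter_mono : ∀ (d : ℕ) {S S' : Set (X → Bool)}, S ⊆ S' →
    LShatter S d → LShatter S' d
  | 0, S, S', hss, h => h.mono hss
  | d + 1, S, S', hss, ⟨x, h0, h1⟩ =>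
      ⟨x, LShatter_mono d (fun g hg => ⟨hss hg.1, hg.2⟩) h0,
          LShatter_mono d (fun g hg => ⟨hss hg.1, hg.2⟩) h1⟩

lemma LShatter_one_of_not_sub {S : Set (X → Bool)} (h : ¬ Sub S) :
    LShatter S 1 := by
  rw [Sub] at h
  push_neg at h
  obtain ⟨g₁, hg₁, g₂, hg₂, hne⟩ := h
  have : ∃ x0 : X, g₁ x0 ≠ g₂ x0 := by
    by_contra hc
    push_neg at hc
    exact hne (funext hc)
  obtain ⟨x0, hx0⟩ := this
  refine ⟨x0, ?_, ?_⟩ <;> rw [LShatter]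
  · cases h1 : g₁ x0 <;> cases h2 : g₂ x0 <;> simp_all
    exacts [⟨g₁, hg₁, h1⟩, ⟨g₂, hg₂, h2⟩]
  · cases h1 : g₁ x0 <;> cases h2 : g₂ x0 <;> simp_all
    exacts [⟨g₂, hg₂, h2⟩, ⟨g₁, hg₁, h1⟩]

/-- The key structural consequence of `L(H) = 1`: whenever a version space
`V ⊆ H` splits on a point and its `false`-side is not a subsingleton, its
`true`-side must be a subsingleton. -/
lemma key_lemma {H : Set (X → Bool)} (hnot2 : ¬ LShatter H 2)
    {V : Set (X → Bool)} (hVH : V ⊆ H) (x0 : X)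
    (hns : ¬ Sub {g | g ∈ V ∧ g x0 = false}) :
    Sub {g | g ∈ V ∧ g x0 = true} := by
  by_contra hns1
  apply hnot2
  have h2 : LShatter V 2 :=
    ⟨x0, LShatter_one_of_not_sub hns, LShatter_one_of_not_sub hns1⟩
  obtain ⟨x1, ha, hb⟩ := h2
  exact ⟨x1, LShatter_mono 1 (fun g hg => ⟨hVH hg.1, hg.2⟩) ha,
             LShatter_mono 1 (fun g hg => ⟨hVH hg.1, hg.2⟩) hb⟩

lemma not_LShatter_two {H : Set (X → Bool)} (hL : Ldim H = 1) : ¬ LShatter H 2 := by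
  intro h
  have h2 : (2 : ℕ∞) ≤ Ldim H := le_sSup ⟨2, h, by norm_num⟩
  rw [hL] at h2
  norm_num at h2

end ATaux

namespace ATaux

variable {X : Type*} {H : Set (X → Bool)} {n : ℕ} {hstar : X → Bool} {x : ℕ → X}

/-- If the learner predicts 0 while some hypothesis in the version space says 1,
then the version space splits, the false-side is not a subsingleton, and no
true-side hypothesis has reached the counter threshold. -/
lemma pred_false_char {t : ℕ} (hp : pR H n hstar x t = false)
    (hw : ∃ g ∈ vR H n hstar x t, g (x t) = true) :
    ¬ Sub {g | g ∈ vR H n hstar x t ∧ g (x t) = false} ∧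
      ∀ g ∈ vR H n hstar x t, g (x t) = true → cnt (hR H n hstar x t) g < n := by
  rw [pR, Learner] at hp
  have hw' : ∃ g ∈ VSet H (hR H n hstar x t), g (x t) = true := hw
  split_ifs at hp with h1 h2 h3
  · push_neg at h2
    exact ⟨h2.1, fun g hg hgt => h2.2 g hg hgt⟩

/-- If the learner predicts 1 and makes a mistake (true label is 0), then either the
false-side of the split is a subsingleton, or some true-side hypothesis reached the
counter threshold. -/
lemma pred_true_mistake_char (hH : hstar ∈ H) {t : ℕ}
    (hp : pR H n hstar x t = true) (hy : hstar (x t) = false) :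
    Sub {g | g ∈ vR H n hstar x t ∧ g (x t) = false} ∨
      ∃ g ∈ vR H n hstar x t, g (x t) = true ∧ n ≤ cnt (hR H n hstar x t) g := by
  rw [pR, Learner] at hp
  split_ifs at hp with h1 h2 h3
  · exact h2
  · exact absurd (⟨⟨hstar, hstar_mem hH t, hy⟩, h3⟩ :
      (∃ h ∈ VSet H (hR H n hstar x t), h (x t) = false) ∧
        ∃ h ∈ VSet H (hR H n hstar x t), h (x t) = true) h1

lemma pred_correct_of_singleton {t : ℕ} (hv : vR H n hstar x t = {hstar}) :
    pR H n hstar x t = hstar (x t) := by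
  rw [pR, Learner]
  rw [vR] at hv
  rw [hv]
  have h1 : ¬ ((∃ h ∈ ({hstar} : Set (X → Bool)), h (x t) = false) ∧
      ∃ h ∈ ({hstar} : Set (X → Bool)), h (x t) = true) := by
    rintro ⟨⟨g1, hg1, hf⟩, g2, hg2, ht⟩
    simp only [Set.mem_singleton_iff] at hg1 hg2
    subst hg1; subst hg2
    rw [hf] at ht; exact Bool.false_ne_true ht
  rw [if_neg h1]
  cases hy : hstar (x t)
  · rw [if_neg]; rintro ⟨g, hg, hgt⟩
    simp only [Set.mem_singleton_iff] at hg; subst hg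
    rw [hy] at hgt; exact Bool.false_ne_true hgt
  · rw [if_pos ⟨hstar, rfl, hy⟩]

lemma singleton_persists {t : ℕ} (hv : vR H n hstar x t = {hstar}) :
    ∀ s : ℕ, vR H n hstar x (t + s) = {hstar} := by
  intro s
  induction s with
  | zero => exact hv
  | succ s ih =>
      ext g
      rw [← Nat.add_assoc, mem_vR_succ, ih]
      simp only [Set.mem_singleton_iff]
      constructor
      · exact fun h => h.1
      · rintro rfl; exact ⟨rfl, fun _ => rfl⟩

/-- After a predict-1 mistake on a round where the false-side is a subsingleton,
the version space collapses to `{hstar}`. -/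
lemma collapse {t : ℕ} (hH : hstar ∈ H) (hp : pR H n hstar x t = true)
    (hy : hstar (x t) = false)
    (hs : Sub {g | g ∈ vR H n hstar x t ∧ g (x t) = false}) :
    vR H n hstar x (t + 1) = {hstar} := by
  ext g
  rw [mem_vR_succ]
  simp only [Set.mem_singleton_iff, hp, true_implies]
  constructor
  · rintro ⟨hg, hgt⟩
    exact hs g ⟨hg, by rw [hgt, hy]⟩ hstar ⟨hstar_mem hH t, hy⟩
  · rintro rfl; exact ⟨hstar_mem hH t, rfl⟩

end ATaux


/-- if L(H) = 1, there is a deterministic apple-tasting learner making at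
most 1 + 2√T mistakes on any realizable stream of length T. -/
theorem deterministic_apple_tasting_Ldim_one {X : Type*} (H : Set (X → Bool))
    (hL : Ldim H = 1) (T : ℕ) :
    ∃ B : List (X × Option Bool) → X → Bool,
      ∀ h ∈ H, ∀ x : ℕ → X,
        ((((Finset.range T).filter fun t =>
            B (atRun B x (fun s => h (x s)) t) (x t) ≠ h (x t)).card : ℝ))
          ≤ 1 + 2 * Real.sqrt T := by
  open ATaux in
  classical
  set n : ℕ := T.sqrt + 1 with hn
  refine ⟨Learner H n, ?_⟩
  intro h hH x
  have hnot2 : ¬ LShatter H 2 := not_LShatter_two hL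
  have hvsub : ∀ t, vR H n h x t ⊆ H := fun t g hg => hg.1
  -- uniqueness of true-side hypotheses on predict-0 rounds
  have huniq : ∀ s : ℕ, pR H n h x s = false →
      ∀ g1 ∈ vR H n h x s, g1 (x s) = true →
      ∀ g2 ∈ vR H n h x s, g2 (x s) = true → g1 = g2 := by
    intro s hp g1 hg1 ht1 g2 hg2 ht2
    have hc := pred_false_char hp ⟨g1, hg1, ht1⟩
    exact key_lemma hnot2 (hvsub s) (x s) hc.1 g1 ⟨hg1, ht1⟩ g2 ⟨hg2, ht2⟩
  set M : Finset ℕ := (Finset.range T).filter fun t =>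
      Learner H n (atRun (Learner H n) x (fun s => h (x s)) t) (x t) ≠ h (x t) with hM
  set A : Finset ℕ := (Finset.range T).filter
      (fun t => pR H n h x t = false ∧ h (x t) = true) with hA
  set K : Finset ℕ := (Finset.range T).filter
      (fun t => pR H n h x t = true ∧ h (x t) = false ∧
        ¬ Sub {g | g ∈ vR H n h x t ∧ g (x t) = false}) with hK
  set Sb : Finset ℕ := (Finset.range T).filter
      (fun t => pR H n h x t = true ∧ h (x t) = false ∧
        Sub {g | g ∈ vR H n h x t ∧ g (x t) = false}) with hSb
  -- the mistake set is covered
  have hMsub : M ⊆ (A ∪ K) ∪ Sb := by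
    intro t ht
    rw [hM, Finset.mem_filter] at ht
    obtain ⟨htT, hne⟩ := ht
    have hne' : pR H n h x t ≠ h (x t) := hne
    simp only [Finset.mem_union, hA, hK, hSb, Finset.mem_filter]
    cases hp : pR H n h x t with
    | false =>
        have hy : h (x t) = true := by
          cases hy : h (x t)
          · rw [hp, hy] at hne'; exact absurd rfl hne'
          · rfl
        exact Or.inl (Or.inl ⟨htT, rfl, hy⟩)
    | true =>
        have hy : h (x t) = false := by
          cases hy : h (x t)
          · rfl
          · rw [hp, hy] at hne'; exact absurd rfl hne'
        by_cases hsb : ATaux.Sub {g | g ∈ vR H n h x t ∧ g (x t) = false}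
        · exact Or.inr ⟨htT, rfl, hy, hsb⟩
        · exact Or.inl (Or.inr ⟨htT, rfl, hy, hsb⟩)
  -- at most one "collapse" mistake
  have hSb1 : Sb.card ≤ 1 := by
    rw [Finset.card_le_one]
    have hkey : ∀ a ∈ Sb, ∀ b ∈ Sb, a < b → False := by
      intro a ha b hb hab
      rw [hSb, Finset.mem_filter] at ha hb
      have hcol := collapse hH ha.2.1 ha.2.2.1 ha.2.2.2
      have hsing : vR H n h x b = {h} := by
        have := singleton_persists hcol (b - (a + 1))
        rwa [Nat.add_sub_cancel' (by omega : a + 1 ≤ b)] at this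
      have := pred_correct_of_singleton hsing
      rw [hb.2.1, hb.2.2.1] at this
      simp at this
    intro a ha b hb
    rcases lt_trichotomy a b with hlt | heq | hgt
    · exact absurd (hkey a ha b hb hlt) (by simp)
    · exact heq
    · exact absurd (hkey b hb a ha hgt) (by simp)
  -- counter of h* bounds the predict-0 mistakes
  have hAcard : A.card ≤ n := by
    have := Finset.card_le_card_of_injOn (fun t => cnt (hR H n h x t) h)
      (s := A) (t := Finset.range n) ?_ ?_
    · simpa using this
    · intro t ht
      rw [Finset.mem_coe, hA, Finset.mem_filter] at ht
      have hc := pred_false_char (hstar := h) ht.2.1 ⟨h, hstar_mem hH t, ht.2.2⟩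
      exact Finset.mem_range.mpr (hc.2 h (hstar_mem hH t) ht.2.2)
    · intro t1 ht1 t2 ht2 heq
      simp only at heq
      rw [Finset.mem_coe, hA, Finset.mem_filter] at ht1 ht2
      by_contra hne
      have hstep : ∀ u1 u2 : ℕ, u1 < u2 →
          pR H n h x u1 = false → h (x u1) = true →
          cnt (hR H n h x u1) h < cnt (hR H n h x u2) h := by
        intro u1 u2 hu hp hy
        have h1 : cnt (hR H n h x (u1 + 1)) h = cnt (hR H n h x u1) h + 1 := by
          rw [cnt_succ]; simp [hp, hy]
        have h2 := cnt_mono (H := H) (n := n) (hstar := h) (x := x) h (by omega : u1 + 1 ≤ u2)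
        omega
      rcases lt_trichotomy t1 t2 with hlt | hE | hgt
      · have := hstep t1 t2 hlt ht1.2.1 ht1.2.2; omega
      · exact hne hE
      · have := hstep t2 t1 hgt ht2.2.1 ht2.2.2; omega
  -- choose the threshold-reaching hypothesis for each counter mistake
  have hKex : ∀ t : ℕ, ∃ gg : X → Bool, t ∈ K →
      gg ∈ vR H n h x t ∧ gg (x t) = true ∧ n ≤ cnt (hR H n h x t) gg := by
    intro t
    by_cases ht : t ∈ K
    · rw [hK, Finset.mem_filter] at ht
      rcases pred_true_mistake_char hH ht.2.1 ht.2.2.1 with hsb | ⟨gg, hgg, hggt, hggc⟩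
      · exact absurd hsb ht.2.2.2
      · exact ⟨gg, fun _ => ⟨hgg, hggt, hggc⟩⟩
    · exact ⟨fun _ => true, fun h' => absurd h' ht⟩
  choose g hg using hKex
  set St : ℕ → Finset ℕ := fun t => (Finset.range T).filter
      (fun s => s < t ∧ pR H n h x s = false ∧ g t (x s) = true) with hSt
  have hStcard : ∀ t ∈ K, n ≤ (St t).card := by
    intro t ht
    have htT : t < T := Finset.mem_range.mp (Finset.mem_filter.mp (hK ▸ ht)).1
    have hc := (hg t ht).2.2
    rw [cnt_eq_card] at hc
    have : (Finset.range t).filter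
        (fun s => pR H n h x s = false ∧ g t (x s) = true) = St t := by
      rw [hSt]
      ext s
      simp only [Finset.mem_filter, Finset.mem_range]
      constructor
      · rintro ⟨hst, hp, hgt⟩; exact ⟨by omega, hst, hp, hgt⟩
      · rintro ⟨_, hst, hp, hgt⟩; exact ⟨hst, hp, hgt⟩
    rwa [this] at hc
  have hgne : ∀ t ∈ K, g t ≠ h := by
    intro t ht hEq
    have h1 := (hg t ht).2.1
    have h2 : h (x t) = false := (Finset.mem_filter.mp (hK ▸ ht)).2.2.1
    rw [hEq, h2] at h1
    exact Bool.false_ne_true h1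
  have hnotmem : ∀ t ∈ K, ∀ s, t < s → g t ∉ vR H n h x s := by
    intro t ht s hts hmem
    have h1 : g t ∈ vR H n h x (t + 1) := vR_antitone (by omega) hmem
    rw [mem_vR_succ] at h1
    have hp : pR H n h x t = true := (Finset.mem_filter.mp (hK ▸ ht)).2.1
    have hy : h (x t) = false := (Finset.mem_filter.mp (hK ▸ ht)).2.2.1
    have := h1.2 hp
    rw [(hg t ht).2.1, hy] at this
    simp at this
  have hdisjA : ∀ t ∈ K, Disjoint A (St t) := by
    intro t ht
    rw [Finset.disjoint_left]
    intro s hsA hsSt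
    rw [hA, Finset.mem_filter] at hsA
    rw [hSt, Finset.mem_filter] at hsSt
    obtain ⟨-, hst, hp, hgt⟩ := hsSt
    have hmem : g t ∈ vR H n h x s := vR_antitone (by omega) ((hg t ht).1)
    have := huniq s hp (g t) hmem hgt h (hstar_mem hH s) hsA.2.2
    exact hgne t ht this
  have hdisjS : ∀ t1 ∈ K, ∀ t2 ∈ K, t1 ≠ t2 → Disjoint (St t1) (St t2) := by
    have haux : ∀ t1 ∈ K, ∀ t2 ∈ K, t1 < t2 → Disjoint (St t1) (St t2) := by
      intro t1 ht1 t2 ht2 hlt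
      rw [Finset.disjoint_left]
      intro s hs1 hs2
      rw [hSt, Finset.mem_filter] at hs1 hs2
      obtain ⟨-, hst1, hp, hgt1⟩ := hs1
      obtain ⟨-, hst2, -, hgt2⟩ := hs2
      have hm1 : g t1 ∈ vR H n h x s := vR_antitone (by omega) ((hg t1 ht1).1)
      have hm2 : g t2 ∈ vR H n h x s := vR_antitone (by omega) ((hg t2 ht2).1)
      have heq := huniq s hp (g t1) hm1 hgt1 (g t2) hm2 hgt2
      exact hnotmem t1 ht1 t2 hlt (heq ▸ (hg t2 ht2).1)
    intro t1 ht1 t2 ht2 hne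
    rcases lt_trichotomy t1 t2 with hlt | hE | hgt
    · exact haux t1 ht1 t2 ht2 hlt
    · exact absurd hE hne
    · exact (haux t2 ht2 t1 ht1 hgt).symm
  -- budget inequality
  have hbudget : n * K.card + A.card ≤ T := by
    have hsum : n * K.card ≤ ∑ t ∈ K, (St t).card := by
      have h' := Finset.card_nsmul_le_sum K (fun t => (St t).card) n hStcard
      simpa [smul_eq_mul, Nat.mul_comm] using h'
    have hbi : (K.biUnion St).card = ∑ t ∈ K, (St t).card :=
      Finset.card_biUnion hdisjS
    have hdisj : Disjoint A (K.biUnion St) := by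
      rw [Finset.disjoint_biUnion_right]
      exact fun t ht => hdisjA t ht
    have hsub : A ∪ K.biUnion St ⊆ Finset.range T := by
      intro s hs
      rcases Finset.mem_union.mp hs with h' | h'
      · exact Finset.mem_of_mem_filter s (hA ▸ h')
      · obtain ⟨t, -, hsg⟩ := Finset.mem_biUnion.mp h'
        exact Finset.mem_of_mem_filter s (hSt ▸ hsg)
    have := Finset.card_le_card hsub
    rw [Finset.card_union_of_disjoint hdisj, Finset.card_range, hbi] at this
    omega
  -- put it together over the reals
  have hMcard : M.card ≤ A.card + K.card + 1 := by
    calc M.card ≤ ((A ∪ K) ∪ Sb).card := Finset.card_le_card hMsub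
      _ ≤ (A ∪ K).card + Sb.card := Finset.card_union_le _ _
      _ ≤ (A.card + K.card) + Sb.card := by
          exact Nat.add_le_add_right (Finset.card_union_le _ _) _
      _ ≤ A.card + K.card + 1 := by omega
  have hs0 : (0:ℝ) ≤ Real.sqrt T := Real.sqrt_nonneg _
  have hss : Real.sqrt T * Real.sqrt T = (T : ℝ) :=
    Real.mul_self_sqrt (by positivity)
  have hsn : Real.sqrt T ≤ (n : ℝ) := by
    have h1 : (T : ℝ) ≤ (n : ℝ) * (n : ℝ) := by
      have h2 : T ≤ (T.sqrt + 1) * (T.sqrt + 1) := Nat.le_of_lt (Nat.lt_succ_sqrt T)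
      have h3 : T ≤ n * n := by rw [hn]; exact h2
      exact_mod_cast h3
    calc Real.sqrt T ≤ Real.sqrt ((n : ℝ) * (n : ℝ)) := Real.sqrt_le_sqrt h1
      _ = (n : ℝ) := Real.sqrt_mul_self (by positivity)
  have hn1s : (n : ℝ) - 1 ≤ Real.sqrt T := by
    have h1 : ((T.sqrt : ℕ) : ℝ) ≤ Real.sqrt T := by
      have h2 : ((T.sqrt * T.sqrt : ℕ) : ℝ) ≤ (T : ℝ) := by
        exact_mod_cast Nat.sqrt_le T
      calc ((T.sqrt : ℕ) : ℝ) = Real.sqrt (((T.sqrt : ℕ) : ℝ) * ((T.sqrt : ℕ) : ℝ)) :=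
            (Real.sqrt_mul_self (by positivity)).symm
        _ ≤ Real.sqrt T := Real.sqrt_le_sqrt (by push_cast at h2 ⊢; linarith)
    have : ((n : ℕ) : ℝ) = (T.sqrt : ℝ) + 1 := by rw [hn]; push_cast; ring
    rw [this]; linarith
  have hcast : ((M.card : ℕ) : ℝ) ≤ (A.card : ℝ) + (K.card : ℝ) + 1 := by
    exact_mod_cast hMcard
  have hbR : (n : ℝ) * (K.card : ℝ) + (A.card : ℝ) ≤ (T : ℝ) := by
    exact_mod_cast hbudget
  have hAR : (A.card : ℝ) ≤ (n : ℝ) := by exact_mod_cast hAcard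
  have hnR : (1:ℝ) ≤ (n : ℝ) := by
    have : 1 ≤ n := by omega
    exact_mod_cast this
  have hk0 : (0:ℝ) ≤ (K.card : ℝ) := Nat.cast_nonneg _
  have ha0 : (0:ℝ) ≤ (A.card : ℝ) := Nat.cast_nonneg _
  have hmain : (A.card : ℝ) + (K.card : ℝ) ≤ 2 * Real.sqrt T := by
    have hbR' : (n : ℝ) * (K.card : ℝ) + (A.card : ℝ) ≤ Real.sqrt T * Real.sqrt T := by
      rw [hss]; exact hbR
    have e1 : (A.card : ℝ) * ((n : ℝ) - 1) ≤ (n : ℝ) * ((n : ℝ) - 1) :=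
      mul_le_mul_of_nonneg_right hAR (by linarith)
    have e2 : (n : ℝ) * ((n : ℝ) - 1) ≤ (n : ℝ) * Real.sqrt T :=
      mul_le_mul_of_nonneg_left hn1s (by linarith)
    have e3 : Real.sqrt T * Real.sqrt T ≤ (n : ℝ) * Real.sqrt T :=
      mul_le_mul_of_nonneg_right hsn hs0
    have e4 : (n : ℝ) * ((A.card : ℝ) + (K.card : ℝ)) ≤
        (n : ℝ) * (2 * Real.sqrt T) := by nlinarith [e1, e2, e3, hbR']
    exact le_of_mul_le_mul_left e4 (by linarith)
  calc ((M.card : ℕ) : ℝ) ≤ (A.card : ℝ) + (K.card : ℝ) + 1 := hcast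
    _ ≤ 1 + 2 * Real.sqrt T := by linarith
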